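/- Let p ≥ 1, α ∈ [0,1), and let X, Y ∈ L^p be random variables (on possibly the same probability space) with Wasserstein-p distance W_p(X,Y) ≤ δ. Then EVaR_α^p(Y) ≤ EVaR_α^p(X) + δ(1-α)^{-1/p}, where EVaR_α^p(Z) = inf_{t ∈ ℝ}{ t + (1/(1-α))^{1/p} ‖(Z-t)⁺‖_p }. -/

import Mathlib

open MeasureTheory

/-- The Rényi entropic value-at-risk of order `p` at level `α`, in its
Rockafellar–Uryasev primal form. -/
noncomputable def EVaR {Ω : Type*} [MeasurableSpace Ω] (μ : Measure Ω)
    (p α : ℝ) (X : Ω → ℝ) : ℝ :=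
  ⨅ t : ℝ, (t + (1 / (1 - α)) ^ (1 / p) * (∫ ω, (max (X ω - t) 0) ^ p ∂μ) ^ (1 / p))

/-- `(∫ |f|^p)^(1/p)` equals the `toReal` of the `L^p` seminorm, for `f ∈ L^p`. -/
lemma aux_norm {Ω : Type*} [MeasurableSpace Ω] {μ : Measure Ω} {p : ℝ} (hp : 1 ≤ p)
    {f : Ω → ℝ} (hf : MemLp f (ENNReal.ofReal p) μ) :
    (eLpNorm f (ENNReal.ofReal p) μ).toReal = (∫ ω, |f ω| ^ p ∂μ) ^ (1 / p) := by
  have hp0 : 0 < p := lt_of_lt_of_le one_pos hp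
  have hq0 : (ENNReal.ofReal p) ≠ 0 := by
    simp only [ne_eq, ENNReal.ofReal_eq_zero, not_le]; linarith
  rw [hf.eLpNorm_eq_integral_rpow_norm hq0 ENNReal.ofReal_ne_top]
  rw [ENNReal.toReal_ofReal (by positivity)]
  simp [Real.norm_eq_abs, ENNReal.toReal_ofReal hp0.le, one_div]

theorem stmt_10 {Ω : Type*} [MeasurableSpace Ω] (μ : Measure Ω) [IsProbabilityMeasure μ]
    (p : ℝ) (hp : 1 ≤ p) (α : ℝ) (hα : α ∈ Set.Ico (0:ℝ) 1) (δ : ℝ) (hδ : 0 ≤ δ)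
    (X Y : Ω → ℝ) (hX : MemLp X (ENNReal.ofReal p) μ) (hY : MemLp Y (ENNReal.ofReal p) μ)
    (hW : ∀ ε > (0:ℝ), ∃ X' Y' : Ω → ℝ,
        MemLp X' (ENNReal.ofReal p) μ ∧ MemLp Y' (ENNReal.ofReal p) μ ∧
        μ.map X' = μ.map X ∧ μ.map Y' = μ.map Y ∧
        (∫ ω, |X' ω - Y' ω| ^ p ∂μ) ^ (1 / p) ≤ δ + ε) :
    EVaR μ p α Y ≤ EVaR μ p α X + δ * (1 - α) ^ (-(1 / p)) := by
  obtain ⟨hα0, hα1⟩ := hα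
  have hp0 : 0 < p := lt_of_lt_of_le one_pos hp
  have h1α : 0 < 1 - α := by linarith
  set q : ENNReal := ENNReal.ofReal p with hqdef
  have hq0 : q ≠ 0 := by simp only [hqdef, ne_eq, ENNReal.ofReal_eq_zero, not_le]; linarith
  have hq1 : (1:ENNReal) ≤ q := by
    rw [hqdef, ← ENNReal.ofReal_one]
    exact ENNReal.ofReal_le_ofReal hp
  set c : ℝ := (1 / (1 - α)) ^ (1 / p) with hc
  have hc1 : 1 ≤ c := Real.one_le_rpow (by rw [le_div_iff₀ h1α]; linarith) (by positivity)
  have hc0 : 0 < c := lt_of_lt_of_le one_pos hc1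
  have hceq : c = (1 - α) ^ (-(1 / p)) := by
    rw [hc, one_div (1 - α), Real.inv_rpow h1α.le, ← Real.rpow_neg h1α.le]
  -- membership of positive parts
  have hpos : ∀ (Z : Ω → ℝ), MemLp Z q μ → ∀ t : ℝ,
      MemLp (fun ω => max (Z ω - t) 0) q μ := fun Z hZ t =>
    (hZ.sub (memLp_const t)).pos_part
  -- the function whose infimum defines EVaR is bounded below by ∫ Z
  have key_lb : ∀ (Z : Ω → ℝ), MemLp Z q μ → ∀ t : ℝ,
      (∫ ω, Z ω ∂μ) ≤ t + c * (∫ ω, max (Z ω - t) 0 ^ p ∂μ) ^ (1 / p) := by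
    intro Z hZ t
    set g : Ω → ℝ := fun ω => max (Z ω - t) 0 with hg
    have hgmem : MemLp g q μ := hpos Z hZ t
    have hg1 : MemLp g 1 μ := hgmem.mono_exponent hq1
    have hgint : Integrable g μ := memLp_one_iff_integrable.mp hg1
    have hZint : Integrable Z μ :=
      memLp_one_iff_integrable.mp (hZ.mono_exponent hq1)
    have habs : ∀ ω, |g ω| = g ω := fun ω => abs_of_nonneg (le_max_right _ _)
    have hN : (∫ ω, g ω ^ p ∂μ) ^ (1 / p) = (eLpNorm g q μ).toReal := by
      rw [aux_norm hp hgmem]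
      congr 1
      exact integral_congr_ae (Filter.Eventually.of_forall fun ω => by
        simp only []
        rw [habs ω])
    have h1 : (eLpNorm g 1 μ).toReal ≤ (eLpNorm g q μ).toReal :=
      ENNReal.toReal_mono hgmem.2.ne
        (eLpNorm_le_eLpNorm_of_exponent_le hq1 hgmem.1)
    have h2 : (eLpNorm g 1 μ).toReal = ∫ ω, g ω ∂μ := by
      rw [hg1.eLpNorm_eq_integral_rpow_norm one_ne_zero ENNReal.one_ne_top]
      simp only [ENNReal.toReal_one, Real.rpow_one, inv_one]
      rw [ENNReal.toReal_ofReal (integral_nonneg fun ω => norm_nonneg _)]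
      apply integral_congr_ae
      exact Filter.Eventually.of_forall fun ω => by
        simp only [Real.norm_eq_abs]
        rw [habs ω]
    have h3 : (∫ ω, Z ω ∂μ) - t ≤ ∫ ω, g ω ∂μ := by
      have : (∫ ω, Z ω ∂μ) - t = ∫ ω, (Z ω - t) ∂μ := by
        rw [integral_sub hZint (integrable_const t), integral_const]
        simp
      rw [this]
      exact integral_mono (hZint.sub (integrable_const t)) hgint
        (fun ω => le_max_left _ _)
    have hNnn : 0 ≤ (∫ ω, g ω ^ p ∂μ) ^ (1 / p) :=
      Real.rpow_nonneg
        (integral_nonneg fun ω => Real.rpow_nonneg (le_max_right _ _) _) _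
    nlinarith [hN, h1, h2, h3]
  -- law invariance of the integral ∫ max(Z - t, 0)^p
  have law_inv : ∀ (Z Z' : Ω → ℝ), MemLp Z q μ → MemLp Z' q μ → μ.map Z' = μ.map Z →
      ∀ t : ℝ, (∫ ω, max (Z' ω - t) 0 ^ p ∂μ) = ∫ ω, max (Z ω - t) 0 ^ p ∂μ := by
    intro Z Z' hZ hZ' hmap t
    set φ : ℝ → ℝ := fun y => max (y - t) 0 ^ p with hφ
    have hφc : Continuous φ :=
      (Real.continuous_rpow_const hp0.le).comp
        ((continuous_id.sub continuous_const).max continuous_const)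
    have e1 : (∫ ω, φ (Z' ω) ∂μ) = ∫ y, φ y ∂(μ.map Z') :=
      (integral_map hZ'.aestronglyMeasurable.aemeasurable
        hφc.aestronglyMeasurable).symm
    have e2 : (∫ ω, φ (Z ω) ∂μ) = ∫ y, φ y ∂(μ.map Z) :=
      (integral_map hZ.aestronglyMeasurable.aemeasurable
        hφc.aestronglyMeasurable).symm
    rw [show (∫ ω, max (Z' ω - t) 0 ^ p ∂μ) = ∫ ω, φ (Z' ω) ∂μ from rfl,
      show (∫ ω, max (Z ω - t) 0 ^ p ∂μ) = ∫ ω, φ (Z ω) ∂μ from rfl, e1, e2, hmap]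
  have bddY : BddBelow (Set.range fun t : ℝ =>
      t + c * (∫ ω, max (Y ω - t) 0 ^ p ∂μ) ^ (1 / p)) := by
    refine ⟨∫ ω, Y ω ∂μ, ?_⟩
    rintro x ⟨t, rfl⟩
    exact key_lb Y hY t
  -- main ε-argument
  have main : ∀ ε > (0:ℝ), EVaR μ p α Y ≤ EVaR μ p α X + δ * (1 - α) ^ (-(1 / p)) + ε := by
    intro ε hε
    -- choose t nearly achieving the infimum for X
    have hlt : EVaR μ p α X < EVaR μ p α X + ε / 2 := by linarith
    obtain ⟨t, ht⟩ := exists_lt_of_ciInf_lt (show (⨅ t : ℝ,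
        (t + c * (∫ ω, max (X ω - t) 0 ^ p ∂μ) ^ (1 / p))) < EVaR μ p α X + ε / 2 from hlt)
    -- choose a near-optimal coupling
    obtain ⟨X', Y', hX', hY', hmapX, hmapY, hdist⟩ := hW (ε / (2 * c)) (by positivity)
    set gX : Ω → ℝ := fun ω => max (X' ω - t) 0 with hgX
    set gY : Ω → ℝ := fun ω => max (Y' ω - t) 0 with hgY
    have hgXm : MemLp gX q μ := hpos X' hX' t
    have hgYm : MemLp gY q μ := hpos Y' hY' t
    have hdm : MemLp (fun ω => Y' ω - X' ω) q μ := hY'.sub hX'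
    -- triangle inequality in L^p
    have tri : eLpNorm gY q μ ≤ eLpNorm gX q μ + eLpNorm (fun ω => Y' ω - X' ω) q μ := by
      have hsplit : gY = gX + (gY - gX) := by funext ω; simp
      calc eLpNorm gY q μ = eLpNorm (gX + (gY - gX)) q μ := by rw [← hsplit]
        _ ≤ eLpNorm gX q μ + eLpNorm (gY - gX) q μ :=
            eLpNorm_add_le hgXm.1 (hgYm.sub hgXm).1 hq1
        _ ≤ eLpNorm gX q μ + eLpNorm (fun ω => Y' ω - X' ω) q μ := by
            gcongr
            apply eLpNorm_mono
            intro ω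
            simp only [Pi.sub_apply, Real.norm_eq_abs, hgY, hgX]
            calc |max (Y' ω - t) 0 - max (X' ω - t) 0| ≤ |(Y' ω - t) - (X' ω - t)| :=
                  abs_max_sub_max_le_abs _ _ _
              _ = |Y' ω - X' ω| := by ring_nf
    -- pass to real numbers
    have htri : (eLpNorm gY q μ).toReal ≤
        (eLpNorm gX q μ).toReal + (eLpNorm (fun ω => Y' ω - X' ω) q μ).toReal := by
      rw [← ENNReal.toReal_add hgXm.2.ne hdm.2.ne]
      exact ENNReal.toReal_mono (by exact ENNReal.add_ne_top.2 ⟨hgXm.2.ne, hdm.2.ne⟩) tri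
    -- identify the three terms
    have eY : (eLpNorm gY q μ).toReal = (∫ ω, max (Y ω - t) 0 ^ p ∂μ) ^ (1 / p) := by
      rw [aux_norm hp hgYm, ← law_inv Y Y' hY hY' hmapY t]
      congr 1
      exact integral_congr_ae (Filter.Eventually.of_forall fun ω => by
        simp only []
        rw [abs_of_nonneg (le_max_right _ _)])
    have eX : (eLpNorm gX q μ).toReal = (∫ ω, max (X ω - t) 0 ^ p ∂μ) ^ (1 / p) := by
      rw [aux_norm hp hgXm, ← law_inv X X' hX hX' hmapX t]
      congr 1
      exact integral_congr_ae (Filter.Eventually.of_forall fun ω => by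
        simp only []
        rw [abs_of_nonneg (le_max_right _ _)])
    have eD : (eLpNorm (fun ω => Y' ω - X' ω) q μ).toReal ≤ δ + ε / (2 * c) := by
      rw [aux_norm hp hdm]
      have : (∫ ω, |Y' ω - X' ω| ^ p ∂μ) = ∫ ω, |X' ω - Y' ω| ^ p ∂μ :=
        integral_congr_ae (Filter.Eventually.of_forall fun ω => by
          simp only []
          rw [abs_sub_comm])
      rw [this]
      exact hdist
    -- chain of inequalities
    have hNY : (∫ ω, max (Y ω - t) 0 ^ p ∂μ) ^ (1 / p) ≤
        (∫ ω, max (X ω - t) 0 ^ p ∂μ) ^ (1 / p) + (δ + ε / (2 * c)) := by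
      rw [← eY, ← eX]; linarith
    have step1 : EVaR μ p α Y ≤ t + c * (∫ ω, max (Y ω - t) 0 ^ p ∂μ) ^ (1 / p) :=
      ciInf_le bddY t
    have hcc : c * (ε / (2 * c)) = ε / 2 := by field_simp
    calc EVaR μ p α Y ≤ t + c * (∫ ω, max (Y ω - t) 0 ^ p ∂μ) ^ (1 / p) := step1
      _ ≤ t + c * ((∫ ω, max (X ω - t) 0 ^ p ∂μ) ^ (1 / p) + (δ + ε / (2 * c))) := by
          gcongr
      _ = (t + c * (∫ ω, max (X ω - t) 0 ^ p ∂μ) ^ (1 / p)) + c * δ + ε / 2 := by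
          rw [mul_add, mul_add, hcc]; ring
      _ ≤ (EVaR μ p α X + ε / 2) + c * δ + ε / 2 := by linarith [ht.le]
      _ = EVaR μ p α X + δ * c + ε := by ring
      _ = EVaR μ p α X + δ * (1 - α) ^ (-(1 / p)) + ε := by rw [← hceq]
  -- conclude
  by_contra hcon
  push_neg at hcon
  have := main ((EVaR μ p α Y - (EVaR μ p α X + δ * (1 - α) ^ (-(1 / p)))) / 2)
    (by linarith)
  linarith
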